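/- For all x in (0, 1), e^(-b·x²) < x/tan x, where b = log(tan 1) ≈ 0.443023. -/

import Mathlib

open Real Set

private lemma aux1 : ∀ t ∈ Set.Icc (0:ℝ) 2, t * Real.cos t ≤ Real.sin t := by
  have hd : ∀ t : ℝ, HasDerivAt (fun t => Real.sin t - t * Real.cos t) (t * Real.sin t) t := by
    intro t
    have h := (Real.hasDerivAt_sin t).sub ((hasDerivAt_id t).mul (Real.hasDerivAt_cos t))
    refine h.congr_deriv ?_
    simp [id_eq]
  have hmono : MonotoneOn (fun t => Real.sin t - t * Real.cos t) (Set.Icc (0:ℝ) 2) := by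
    apply monotoneOn_of_deriv_nonneg (convex_Icc 0 2)
    · exact fun t _ => ((hd t).continuousAt).continuousWithinAt
    · exact fun t _ => ((hd t).differentiableAt).differentiableWithinAt
    · intro t ht
      rw [interior_Icc] at ht
      rw [(hd t).deriv]
      have hs : 0 ≤ Real.sin t := Real.sin_nonneg_of_nonneg_of_le_pi ht.1.le
        (by nlinarith [Real.pi_gt_three, ht.2])
      exact mul_nonneg ht.1.le hs
  intro t ht
  have h0 := hmono (Set.left_mem_Icc.mpr (by norm_num)) ht ht.1
  simp only [Real.sin_zero, Real.cos_zero, mul_one, zero_mul, sub_zero] at h0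
  linarith

private lemma aux2 : ∀ x ∈ Set.Icc (0:ℝ) 1,
    0 ≤ 2 - 2 * Real.cos (2*x) - 2*x * Real.sin (2*x) := by
  have hd : ∀ x : ℝ, HasDerivAt (fun x => 2 - 2 * Real.cos (2*x) - 2*x * Real.sin (2*x))
      (2 * Real.sin (2*x) - 4*x * Real.cos (2*x)) x := by
    intro x
    have h2x : HasDerivAt (fun x : ℝ => 2*x) 2 x := by
      simpa using (hasDerivAt_id x).const_mul 2
    have hc : HasDerivAt (fun x => Real.cos (2*x)) (-Real.sin (2*x) * 2) x :=
      (Real.hasDerivAt_cos (2*x)).comp x h2x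
    have hs : HasDerivAt (fun x => Real.sin (2*x)) (Real.cos (2*x) * 2) x :=
      (Real.hasDerivAt_sin (2*x)).comp x h2x
    have h := ((hasDerivAt_const x (2:ℝ)).sub (hc.const_mul 2)).sub (h2x.mul hs)
    refine h.congr_deriv ?_
    ring
  have hmono : MonotoneOn (fun x => 2 - 2 * Real.cos (2*x) - 2*x * Real.sin (2*x))
      (Set.Icc (0:ℝ) 1) := by
    apply monotoneOn_of_deriv_nonneg (convex_Icc 0 1)
    · exact fun x _ => ((hd x).continuousAt).continuousWithinAt
    · exact fun x _ => ((hd x).differentiableAt).differentiableWithinAt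
    · intro x hx
      rw [interior_Icc] at hx
      rw [(hd x).deriv]
      have := aux1 (2*x) ⟨by linarith [hx.1], by linarith [hx.2]⟩
      linarith
  intro x hx
  have h0 := hmono (Set.left_mem_Icc.mpr (by norm_num)) hx hx.1
  norm_num at h0
  linarith

private lemma aux3 : ∀ x ∈ Set.Icc (0:ℝ) 1,
    0 ≤ 2*x + x * Real.cos (2*x) - (3/2) * Real.sin (2*x) := by
  have hd : ∀ x : ℝ, HasDerivAt (fun x => 2*x + x * Real.cos (2*x) - (3/2) * Real.sin (2*x))
      (2 - 2 * Real.cos (2*x) - 2*x * Real.sin (2*x)) x := by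
    intro x
    have h2x : HasDerivAt (fun x : ℝ => 2*x) 2 x := by
      simpa using (hasDerivAt_id x).const_mul 2
    have hc : HasDerivAt (fun x => Real.cos (2*x)) (-Real.sin (2*x) * 2) x :=
      (Real.hasDerivAt_cos (2*x)).comp x h2x
    have hs : HasDerivAt (fun x => Real.sin (2*x)) (Real.cos (2*x) * 2) x :=
      (Real.hasDerivAt_sin (2*x)).comp x h2x
    have h := (h2x.add ((hasDerivAt_id x).mul hc)).sub (hs.const_mul (3/2))
    refine h.congr_deriv ?_
    simp [id_eq]
    ring
  have hmono : MonotoneOn (fun x => 2*x + x * Real.cos (2*x) - (3/2) * Real.sin (2*x))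
      (Set.Icc (0:ℝ) 1) := by
    apply monotoneOn_of_deriv_nonneg (convex_Icc 0 1)
    · exact fun x _ => ((hd x).continuousAt).continuousWithinAt
    · exact fun x _ => ((hd x).differentiableAt).differentiableWithinAt
    · intro x hx
      rw [interior_Icc] at hx
      rw [(hd x).deriv]
      exact aux2 x ⟨hx.1.le, hx.2.le⟩
  intro x hx
  have h0 := hmono (Set.left_mem_Icc.mpr (by norm_num)) hx hx.1
  norm_num at h0
  linarith

private lemma aux4 : ∀ x ∈ Set.Icc (0:ℝ) 1,
    0 ≤ x^2 + x * Real.sin (2*x) / 2 - 1 + Real.cos (2*x) := by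
  have hd : ∀ x : ℝ, HasDerivAt (fun x => x^2 + x * Real.sin (2*x) / 2 - 1 + Real.cos (2*x))
      (2*x + x * Real.cos (2*x) - (3/2) * Real.sin (2*x)) x := by
    intro x
    have h2x : HasDerivAt (fun x : ℝ => 2*x) 2 x := by
      simpa using (hasDerivAt_id x).const_mul 2
    have hc : HasDerivAt (fun x => Real.cos (2*x)) (-Real.sin (2*x) * 2) x :=
      (Real.hasDerivAt_cos (2*x)).comp x h2x
    have hs : HasDerivAt (fun x => Real.sin (2*x)) (Real.cos (2*x) * 2) x :=
      (Real.hasDerivAt_sin (2*x)).comp x h2x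
    have hp : HasDerivAt (fun x : ℝ => x^2) (2*x) x := by
      simpa using hasDerivAt_pow 2 x
    have h := ((hp.add (((hasDerivAt_id x).mul hs).div_const 2)).sub
      (hasDerivAt_const x (1:ℝ))).add hc
    refine h.congr_deriv ?_
    simp [id_eq]
    ring
  have hmono : MonotoneOn (fun x => x^2 + x * Real.sin (2*x) / 2 - 1 + Real.cos (2*x))
      (Set.Icc (0:ℝ) 1) := by
    apply monotoneOn_of_deriv_nonneg (convex_Icc 0 1)
    · exact fun x _ => ((hd x).continuousAt).continuousWithinAt
    · exact fun x _ => ((hd x).differentiableAt).differentiableWithinAt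
    · intro x hx
      rw [interior_Icc] at hx
      rw [(hd x).deriv]
      exact aux3 x ⟨hx.1.le, hx.2.le⟩
  intro x hx
  have h0 := hmono (Set.left_mem_Icc.mpr (by norm_num)) hx hx.1
  norm_num at h0
  linarith

private lemma psi : ∀ x ∈ Set.Icc (0:ℝ) 1,
    2 * Real.sin x ^ 2 ≤ x^2 + x * Real.sin x * Real.cos x := by
  intro x hx
  have h := aux4 x hx
  rw [Real.sin_two_mul, Real.cos_two_mul] at h
  nlinarith [Real.sin_sq_add_cos_sq x]


private noncomputable def f : ℝ → ℝ := fun x => (Real.log (Real.tan x) - Real.log x) / x^2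

private lemma one_lt_pi_div_two : (1:ℝ) < Real.pi / 2 := by nlinarith [Real.pi_gt_three]

private lemma hderiv {x : ℝ} (hx : x ∈ Set.Ioc (0:ℝ) 1) :
    HasDerivAt f
      (((1 / Real.cos x ^ 2 / Real.tan x - 1/x) * x^2
        - (Real.log (Real.tan x) - Real.log x) * (2*x)) / (x^2)^2) x := by
  have hxpi : x < Real.pi / 2 := lt_of_le_of_lt hx.2 one_lt_pi_div_two
  have hcos : 0 < Real.cos x := Real.cos_pos_of_mem_Ioo ⟨by linarith [hx.1, Real.pi_pos], hxpi⟩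
  have htan : 0 < Real.tan x := Real.tan_pos_of_pos_of_lt_pi_div_two hx.1 hxpi
  have hlt : HasDerivAt (fun x => Real.log (Real.tan x)) (1 / Real.cos x ^ 2 / Real.tan x) x :=
    (Real.hasDerivAt_tan hcos.ne').log htan.ne'
  have hlx : HasDerivAt Real.log (1/x) x := by
    simpa using Real.hasDerivAt_log hx.1.ne'
  have hp : HasDerivAt (fun x : ℝ => x^2) (2*x) x := by
    simpa using hasDerivAt_pow 2 x
  exact (hlt.sub hlx).div hp (pow_ne_zero 2 hx.1.ne')

private lemma fmono : StrictMonoOn f (Set.Ioc (0:ℝ) 1) := by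
  apply strictMonoOn_of_deriv_pos (convex_Ioc 0 1)
  · exact fun x hx => ((hderiv hx).continuousAt).continuousWithinAt
  · intro x hx
    rw [interior_Ioc] at hx
    rw [(hderiv ⟨hx.1, hx.2.le⟩).deriv]
    have hxpi : x < Real.pi / 2 := lt_trans hx.2 one_lt_pi_div_two
    have hcos : 0 < Real.cos x := Real.cos_pos_of_mem_Ioo ⟨by linarith [hx.1, Real.pi_pos], hxpi⟩
    have hsin : 0 < Real.sin x := Real.sin_pos_of_pos_of_lt_pi hx.1 (by nlinarith [Real.pi_gt_three, hx.2])
    have htan : x < Real.tan x := Real.lt_tan hx.1 hxpi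
    have htpos : 0 < Real.tan x := lt_trans hx.1 htan
    apply div_pos _ (pow_pos (pow_pos hx.1 2) 2)
    -- key algebraic inequality
    have hlog : Real.log (Real.tan x) - Real.log x = Real.log (Real.tan x / x) := by
      rw [Real.log_div htpos.ne' hx.1.ne']
    have hlog2 : Real.log (Real.tan x / x) < Real.tan x / x - 1 :=
      Real.log_lt_sub_one_of_pos (div_pos htpos hx.1) (by
        have : 1 < Real.tan x / x := (one_lt_div hx.1).mpr htan
        exact this.ne')
    have hpsi := psi x ⟨hx.1.le, hx.2.le⟩
    have key : (Real.tan x / x - 1) * (2*x) ≤ (1 / Real.cos x ^ 2 / Real.tan x - 1/x) * x^2 := by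
      rw [Real.tan_eq_sin_div_cos]
      have heq : (1 / Real.cos x ^ 2 / (Real.sin x / Real.cos x) - 1/x) * x^2
          - (Real.sin x / Real.cos x / x - 1) * (2*x)
          = (x^2 + x * Real.sin x * Real.cos x - 2 * Real.sin x ^ 2) / (Real.sin x * Real.cos x) := by
        field_simp [hx.1.ne', hsin.ne', hcos.ne']
        ring
      nlinarith [div_nonneg (by linarith : (0:ℝ) ≤ x^2 + x * Real.sin x * Real.cos x - 2 * Real.sin x ^ 2) (by positivity : (0:ℝ) ≤ Real.sin x * Real.cos x)]
    rw [hlog]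
    have : Real.log (Real.tan x / x) * (2*x) < (Real.tan x / x - 1) * (2*x) := by
      apply mul_lt_mul_of_pos_right hlog2 (by linarith [hx.1])
    linarith

theorem stmt_5 : ∀ x ∈ Set.Ioo (0:ℝ) 1,
    Real.exp (-(Real.log (Real.tan 1)) * x^2) < x / Real.tan x := by
  intro x hx
  have hxpi : x < Real.pi / 2 := lt_trans hx.2 one_lt_pi_div_two
  have htpos : 0 < Real.tan x := Real.tan_pos_of_pos_of_lt_pi_div_two hx.1 hxpi
  have hf : f x < f 1 := fmono ⟨hx.1, hx.2.le⟩ (Set.right_mem_Ioc.mpr one_pos) hx.2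
  have hf1 : f 1 = Real.log (Real.tan 1) := by simp [f]
  rw [hf1, f, div_lt_iff₀ (pow_pos hx.1 2)] at hf
  rw [lt_div_iff₀ htpos]
  have heq : Real.exp (-(Real.log (Real.tan 1)) * x^2) * Real.tan x
      = Real.exp (-(Real.log (Real.tan 1)) * x^2 + Real.log (Real.tan x)) := by
    rw [Real.exp_add, Real.exp_log htpos]
  rw [heq]
  calc Real.exp (-(Real.log (Real.tan 1)) * x^2 + Real.log (Real.tan x))
      < Real.exp (Real.log x) := Real.exp_lt_exp.mpr (by nlinarith)
    _ = x := Real.exp_log hx.1
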